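/- Volume-change integral limit (Jacobian term of the shape-derivative splitting): Let Ω ⊆ ℝ^d be a bounded open set with λ^d(∂Ω) = 0, let V : ℝ^d → ℝ^d be an admissible distortion, and let h : ℝ^d → ℝ be continuous. Then lim_{ε→0} (1/ε) ∫_{Ω_ε} h(x) · (1 − |det(I_d + ε DV(x))|) dλ^d(x) = − ∫_Ω h(x) · div V(x) dλ^d(x), where DV denotes the Jacobian matrix of V and div V its divergence. -/

import Mathlib

open Filter MeasureTheory

namespace VCIL
variable {d : ℕ}

lemma det_updateRow_one (i : Fin d) (r : Fin d → ℝ) :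
    (Matrix.updateRow (1 : Matrix (Fin d) (Fin d) ℝ) i r).det = r i := by
  have hr : r = ∑ k, r k • (1 : Matrix (Fin d) (Fin d) ℝ) k := by
    funext j
    simp [Matrix.one_apply, Finset.sum_ite_eq]
  rw [hr, Matrix.det_updateRow_sum]
  simp [Matrix.one_apply, Finset.sum_ite_eq]

lemma det_piecewise_singleton (i : Fin d) (N : Matrix (Fin d) (Fin d) ℝ) :
    Matrix.det (Finset.piecewise {i} N (1 : Matrix (Fin d) (Fin d) ℝ))
      = N i i := by
  have h : (Finset.piecewise {i} N (1 : Matrix (Fin d) (Fin d) ℝ))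
      = Matrix.updateRow (1 : Matrix (Fin d) (Fin d) ℝ) i (N i) := by
    funext j
    by_cases hj : j = i
    · subst hj; simp [Finset.piecewise]
    · simp [Finset.piecewise, hj, Matrix.updateRow_ne hj]
  rw [h, det_updateRow_one]

/-- Multilinear expansion of `det (1 + ε • N)`. -/
lemma det_one_add_smul_expand (ε : ℝ) (N : Matrix (Fin d) (Fin d) ℝ) :
    (1 + ε • N).det = ∑ s : Finset (Fin d),
      ε ^ s.card * Matrix.det (Finset.piecewise s N (1 : Matrix (Fin d) (Fin d) ℝ)) := by
  have h1 : (1 + ε • N) = (ε • N) + (1 : Matrix (Fin d) (Fin d) ℝ) := add_comm _ _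
  rw [h1]
  have key : ((ε • N) + (1 : Matrix (Fin d) (Fin d) ℝ)).det
      = ∑ s : Finset (Fin d), Matrix.det
          (Finset.piecewise s (ε • N) (1 : Matrix (Fin d) (Fin d) ℝ)) := by
    exact (Matrix.detRowAlternating :
      (Fin d → ℝ) [⋀^(Fin d)]→ₗ[ℝ] ℝ).toMultilinearMap.map_add_univ
      (ε • N) (1 : Matrix (Fin d) (Fin d) ℝ)
  rw [key]
  refine Finset.sum_congr rfl fun s _ => ?_
  have h2 : (Finset.piecewise s (ε • N) (1 : Matrix (Fin d) (Fin d) ℝ))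
      = Finset.piecewise s (fun i => ε • (Finset.piecewise s N (1 : Matrix (Fin d) (Fin d) ℝ)) i)
          (Finset.piecewise s N (1 : Matrix (Fin d) (Fin d) ℝ)) := by
    funext j k
    by_cases hj : j ∈ s <;> simp [Finset.piecewise, hj, Matrix.smul_apply]
  rw [h2]
  have := (Matrix.detRowAlternating :
      (Fin d → ℝ) [⋀^(Fin d)]→ₗ[ℝ] ℝ).toMultilinearMap.map_piecewise_smul
      (fun _ => ε) (Finset.piecewise s N (1 : Matrix (Fin d) (Fin d) ℝ)) s
  simp [Finset.prod_const, smul_eq_mul] at this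
  exact this


lemma det_abs_le (B : Matrix (Fin d) (Fin d) ℝ) {c : ℝ} (hc1 : 0 ≤ c)
    (hB : ∀ i j, |B i j| ≤ c) : |B.det| ≤ d.factorial * c ^ d := by
  rw [Matrix.det_apply]
  refine (Finset.abs_sum_le_sum_abs _ _).trans ?_
  have hσ : ∀ σ : Equiv.Perm (Fin d),
      |Equiv.Perm.sign σ • ∏ i, B (σ i) i| ≤ c ^ d := by
    intro σ
    have h1 : |Equiv.Perm.sign σ • ∏ i, B (σ i) i| = |∏ i, B (σ i) i| := by
      rcases Int.units_eq_one_or (Equiv.Perm.sign σ) with h | h <;> simp [h]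
    rw [h1, Finset.abs_prod]
    calc ∏ i, |B (σ i) i| ≤ ∏ _i : Fin d, c :=
          Finset.prod_le_prod (fun i _ => abs_nonneg _) fun i _ => hB _ _
      _ = c ^ d := by simp
  calc ∑ σ : Equiv.Perm (Fin d), |Equiv.Perm.sign σ • ∏ i, B (σ i) i|
      ≤ ∑ _σ : Equiv.Perm (Fin d), c ^ d :=
        Finset.sum_le_sum fun σ _ => hσ σ
    _ = d.factorial * c ^ d := by
        simp [Finset.sum_const, Finset.card_univ, Fintype.card_perm]

lemma piecewise_entry_le {s : Finset (Fin d)} {N : Matrix (Fin d) (Fin d) ℝ} {c : ℝ}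
    (hN : ∀ i j, |N i j| ≤ c) (i j : Fin d) :
    |(Finset.piecewise s N (1 : Matrix (Fin d) (Fin d) ℝ)) i j| ≤ max 1 c := by
  by_cases hi : i ∈ s
  · simp only [Finset.piecewise, hi, if_pos]
    exact (hN i j).trans (le_max_right _ _)
  · simp only [Finset.piecewise, hi, if_neg, not_false_iff]
    rw [Matrix.one_apply]
    by_cases hij : i = j <;> simp [hij]

/-- Key quantitative estimate. -/
lemma key_est (N : Matrix (Fin d) (Fin d) ℝ) {c : ℝ}
    (hN : ∀ i j, |N i j| ≤ c) {ε : ℝ} (hε : |ε| ≤ 1) :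
    |(1 + ε • N).det - 1 - ε * N.trace|
      ≤ ε ^ 2 * (2 ^ d * (d.factorial * max 1 c ^ d)) := by
  classical
  set D : ℝ := d.factorial * max 1 c ^ d with hD
  set g : Finset (Fin d) → ℝ := fun s =>
    ε ^ s.card * Matrix.det (Finset.piecewise s N (1 : Matrix (Fin d) (Fin d) ℝ)) with hg
  set T : Finset (Finset (Fin d)) :=
    insert ∅ (Finset.univ.image fun i : Fin d => ({i} : Finset (Fin d))) with hT
  have hempty : (∅ : Finset (Fin d)) ∉ Finset.univ.image
      (fun i : Fin d => ({i} : Finset (Fin d))) := by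
    simp only [Finset.mem_image, Finset.mem_univ, true_and]
    rintro ⟨i, hi⟩
    exact (Finset.singleton_ne_empty i) hi
  have hsumT : ∑ s ∈ T, g s = 1 + ε * N.trace := by
    rw [hT, Finset.sum_insert hempty, Finset.sum_image
      (fun i _ j _ h => Finset.singleton_injective h)]
    have h0 : g ∅ = 1 := by
      simp [hg, Finset.piecewise_empty, Finset.piecewise]
      convert Matrix.det_one using 2
      congr 1
    have h1 : ∀ i : Fin d, g {i} = ε * N i i := by
      intro i
      simp [hg, det_piecewise_singleton]
    rw [h0]
    simp only [h1]
    rw [← Finset.mul_sum, Matrix.trace]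
    rfl
  have hsplit : (1 + ε • N).det = ∑ s ∈ Finset.univ \ T, g s + ∑ s ∈ T, g s := by
    rw [det_one_add_smul_expand, ← Finset.sum_sdiff (Finset.subset_univ T)]
  have hcard2 : ∀ s ∈ Finset.univ \ T, 2 ≤ s.card := by
    intro s hs
    rw [Finset.mem_sdiff, hT, Finset.mem_insert] at hs
    push_neg at hs
    obtain ⟨_, h₁, h₂⟩ := hs
    rcases Nat.lt_or_ge s.card 2 with h | h
    · interval_cases hc : s.card
      · exact absurd (Finset.card_eq_zero.mp hc) h₁.ne_empty
      · obtain ⟨i, rfl⟩ := Finset.card_eq_one.mp hc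
        exact absurd (Finset.mem_image.mpr ⟨i, Finset.mem_univ i, rfl⟩) h₂
    · exact h
  have hgs : ∀ s ∈ Finset.univ \ T, |g s| ≤ ε ^ 2 * D := by
    intro s hs
    have h2 := hcard2 s hs
    rw [hg, abs_mul, abs_pow]
    have hp : |ε| ^ s.card ≤ |ε| ^ 2 :=
      pow_le_pow_of_le_one (abs_nonneg ε) hε h2
    have hdet := det_abs_le (Finset.piecewise s N (1 : Matrix (Fin d) (Fin d) ℝ))
      (le_trans zero_le_one (le_max_left 1 c)) (piecewise_entry_le hN)
    calc |ε| ^ s.card * |Matrix.det (Finset.piecewise s N (1 : Matrix (Fin d) (Fin d) ℝ))|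
        ≤ |ε| ^ 2 * D := by
          refine mul_le_mul hp hdet (abs_nonneg _) (by positivity)
      _ = ε ^ 2 * D := by rw [sq_abs]
  have habs : |(1 + ε • N).det - 1 - ε * N.trace| = |∑ s ∈ Finset.univ \ T, g s| := by
    rw [hsplit, hsumT]
    ring_nf
  rw [habs]
  calc |∑ s ∈ Finset.univ \ T, g s| ≤ ∑ s ∈ Finset.univ \ T, |g s| :=
        Finset.abs_sum_le_sum_abs _ _
    _ ≤ ∑ _s ∈ Finset.univ \ T, ε ^ 2 * D := Finset.sum_le_sum hgs
    _ = (Finset.univ \ T).card * (ε ^ 2 * D) := by rw [Finset.sum_const, nsmul_eq_mul]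
    _ ≤ (2 ^ d : ℕ) * (ε ^ 2 * D) := by
        refine mul_le_mul_of_nonneg_right ?_ (by positivity)
        have := Finset.card_le_card (Finset.sdiff_subset (s := Finset.univ) (t := T))
        have hcu : (Finset.univ : Finset (Finset (Fin d))).card = 2 ^ d := by
          rw [Finset.card_univ, Fintype.card_finset, Fintype.card_fin]
        exact_mod_cast hcu ▸ this
    _ = ε ^ 2 * (2 ^ d * D) := by push_cast; ring


lemma one_sub_abs_det_est (N : Matrix (Fin d) (Fin d) ℝ) {c : ℝ}
    (hN : ∀ i j, |N i j| ≤ c) {ε : ℝ} (hε : |ε| ≤ 1) :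
    abs (1 - |(1 + ε • N).det|)
      ≤ |ε| * (|N.trace| + 2 ^ d * (d.factorial * max 1 c ^ d)) := by
  have h1 : abs (1 - |(1 + ε • N).det|) ≤ |1 - (1 + ε • N).det| := by
    calc abs (1 - |(1 + ε • N).det|) = abs (|(1:ℝ)| - |(1 + ε • N).det|) := by rw [abs_one]
      _ ≤ |1 - (1 + ε • N).det| := abs_abs_sub_abs_le_abs_sub _ _
  refine h1.trans ?_
  have h2 : (1:ℝ) - (1 + ε • N).det = -((1 + ε • N).det - 1 - ε * N.trace) - ε * N.trace := by
    ring
  rw [h2]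
  have h4 := key_est N hN hε
  calc |(-((1 + ε • N).det - 1 - ε * N.trace)) - ε * N.trace|
      = |(-((1 + ε • N).det - 1 - ε * N.trace)) + (-(ε * N.trace))| := by
        rw [sub_eq_add_neg]
    _ ≤ |(-((1 + ε • N).det - 1 - ε * N.trace))| + |(-(ε * N.trace))| := abs_add_le _ _
    _ = |(1 + ε • N).det - 1 - ε * N.trace| + |ε| * |N.trace| := by
        rw [abs_neg, abs_neg, abs_mul]
    _ ≤ ε ^ 2 * (2 ^ d * (d.factorial * max 1 c ^ d)) + |ε| * |N.trace| := by linarith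
    _ ≤ |ε| * (2 ^ d * (d.factorial * max 1 c ^ d)) + |ε| * |N.trace| := by
        have hsq : ε ^ 2 ≤ |ε| := by
          rw [← sq_abs]
          nlinarith [abs_nonneg ε]
        have hP : (0:ℝ) ≤ 2 ^ d * (d.factorial * max 1 c ^ d) := by positivity
        have := mul_le_mul_of_nonneg_right hsq hP
        linarith
    _ = |ε| * (|N.trace| + 2 ^ d * (d.factorial * max 1 c ^ d)) := by ring

lemma entry_bound_exists (N : Matrix (Fin d) (Fin d) ℝ) :
    ∀ i j, |N i j| ≤ ∑ i', ∑ j', |N i' j'| := by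
  intro i j
  calc |N i j| ≤ ∑ j', |N i j'| :=
        Finset.single_le_sum (f := fun j' => |N i j'|) (fun k _ => abs_nonneg _)
          (Finset.mem_univ j)
    _ ≤ ∑ i', ∑ j', |N i' j'| :=
        Finset.single_le_sum (f := fun i' => ∑ j', |N i' j'|)
          (fun k _ => Finset.sum_nonneg fun _ _ => abs_nonneg _) (Finset.mem_univ i)

/-- Pointwise limit of the divided difference. -/
lemma tendsto_one_sub_abs_det (N : Matrix (Fin d) (Fin d) ℝ) :
    Tendsto (fun ε : ℝ => (1 - |(1 + ε • N).det|) / ε) (nhdsWithin 0 {0}ᶜ)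
      (nhds (-N.trace)) := by
  set c : ℝ := ∑ i', ∑ j', |N i' j'| with hc
  have hNc : ∀ i j, |N i j| ≤ c := entry_bound_exists N
  set C2 : ℝ := 2 ^ d * (d.factorial * max 1 c ^ d) with hC2
  have hC2pos : 0 < C2 := by positivity
  set C : ℝ := |N.trace| + C2 with hCdef
  have hCpos : 0 < C := by positivity
  set δ : ℝ := min 1 (1 / (C + 1)) with hδ
  have hδpos : 0 < δ := lt_min one_pos (by positivity)
  have hev : ∀ᶠ ε in nhdsWithin (0:ℝ) {0}ᶜ, |ε| < δ ∧ ε ≠ 0 := by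
    refine Filter.Eventually.and ?_ ?_
    · refine Filter.Eventually.filter_mono nhdsWithin_le_nhds ?_
      have := Metric.ball_mem_nhds (0:ℝ) hδpos
      filter_upwards [this] with x hx
      simpa [Real.dist_eq] using hx
    · filter_upwards [eventually_mem_nhdsWithin] with x hx
      simpa using hx
  have key : ∀ ε : ℝ, |ε| < δ → ε ≠ 0 →
      |(1 - |(1 + ε • N).det|) / ε + N.trace| ≤ |ε| * C2 := by
    intro ε hεδ hε0
    have hε1 : |ε| ≤ 1 := le_of_lt (lt_of_lt_of_le hεδ (min_le_left _ _))
    have habs : |ε| > 0 := abs_pos.mpr hε0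
    -- det is positive
    have hest := one_sub_abs_det_est N hNc hε1
    have hdetpos : 0 < (1 + ε • N).det := by
      have h1 : |1 - (1 + ε • N).det| ≤ |ε| * C := by
        calc |1 - (1 + ε • N).det|
            = |(((1 + ε • N).det - 1 - ε * N.trace) + ε * N.trace)| := by
              rw [abs_sub_comm]; ring_nf
          _ ≤ |(1 + ε • N).det - 1 - ε * N.trace| + |ε * N.trace| := abs_add_le _ _
          _ ≤ ε ^ 2 * C2 + |ε| * |N.trace| := by
              have hke := key_est N hNc hε1
              rw [← hC2] at hke
              rw [abs_mul]
              linarith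
          _ ≤ |ε| * C2 + |ε| * |N.trace| := by
              have : ε ^ 2 ≤ |ε| := by
                rw [← sq_abs]; nlinarith [abs_nonneg ε]
              nlinarith
          _ = |ε| * C := by rw [hCdef]; ring
      have h3 : |ε| * C < 1 := by
        have hεC : |ε| < 1 / (C + 1) := lt_of_lt_of_le hεδ (min_le_right _ _)
        calc |ε| * C < (1 / (C + 1)) * C := by
              exact mul_lt_mul_of_pos_right hεC hCpos
          _ < 1 := by
              rw [div_mul_eq_mul_div, div_lt_one (by positivity)]
              linarith
      have := abs_lt.mp (lt_of_le_of_lt h1 h3)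
      linarith [this.1, this.2]
    have hdeteq : |(1 + ε • N).det| = (1 + ε • N).det := abs_of_pos hdetpos
    rw [hdeteq]
    have hkey := key_est N hNc hε1
    rw [← hC2] at hkey
    have heq : (1 - (1 + ε • N).det) / ε + N.trace
        = -(((1 + ε • N).det - 1 - ε * N.trace) / ε) := by
      field_simp
      ring
    rw [heq, abs_neg, abs_div]
    rw [div_le_iff₀ habs]
    calc |(1 + ε • N).det - 1 - ε * N.trace| ≤ ε ^ 2 * C2 := hkey
      _ = |ε| * C2 * |ε| := by rw [← sq_abs]; ring
  have h0 : Tendsto (fun ε : ℝ => (1 - |(1 + ε • N).det|) / ε + N.trace)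
      (nhdsWithin 0 {0}ᶜ) (nhds 0) := by
    have hb : ∀ᶠ ε in nhdsWithin (0:ℝ) {0}ᶜ,
        ‖(1 - |(1 + ε • N).det|) / ε + N.trace‖ ≤ |ε| * C2 := by
      filter_upwards [hev] with ε hε
      exact key ε hε.1 hε.2
    have hg : Tendsto (fun ε : ℝ => |ε| * C2) (nhdsWithin (0:ℝ) {0}ᶜ) (nhds 0) := by
      have h2 : Tendsto (fun ε : ℝ => |ε| * C2) (nhds 0) (nhds 0) := by
        have := (continuous_abs.mul (continuous_const (y := C2))).tendsto (0:ℝ)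
        simpa only [Pi.mul_def, abs_zero, zero_mul] using this
      exact h2.mono_left nhdsWithin_le_nhds
    exact squeeze_zero_norm' hb hg
  have h1 := h0.sub_const N.trace
  simpa using h1


section Bridge
variable {d : ℕ}

noncomputable def bE : Module.Basis (Fin d) ℝ (EuclideanSpace ℝ (Fin d)) :=
  (EuclideanSpace.basisFun (Fin d) ℝ).toBasis

noncomputable def matOf (L : EuclideanSpace ℝ (Fin d) →L[ℝ] EuclideanSpace ℝ (Fin d)) :
    Matrix (Fin d) (Fin d) ℝ :=
  LinearMap.toMatrix bE bE (L : EuclideanSpace ℝ (Fin d) →ₗ[ℝ] EuclideanSpace ℝ (Fin d))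

lemma det_eq_matrix (ε : ℝ) (L : EuclideanSpace ℝ (Fin d) →L[ℝ] EuclideanSpace ℝ (Fin d)) :
    ContinuousLinearMap.det
        (ContinuousLinearMap.id ℝ (EuclideanSpace ℝ (Fin d)) + ε • L)
      = (1 + ε • matOf L).det := by
  show LinearMap.det _ = _
  rw [← LinearMap.det_toMatrix bE]
  congr 1
  have : ((ContinuousLinearMap.id ℝ (EuclideanSpace ℝ (Fin d)) + ε • L :
      EuclideanSpace ℝ (Fin d) →L[ℝ] EuclideanSpace ℝ (Fin d)) :
      EuclideanSpace ℝ (Fin d) →ₗ[ℝ] EuclideanSpace ℝ (Fin d))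
      = LinearMap.id + ε • (L : EuclideanSpace ℝ (Fin d) →ₗ[ℝ] EuclideanSpace ℝ (Fin d)) := by
    ext x
    simp
  rw [this, map_add, LinearMap.toMatrix_id, _root_.map_smul]
  rfl

lemma trace_eq_matrix (L : EuclideanSpace ℝ (Fin d) →L[ℝ] EuclideanSpace ℝ (Fin d)) :
    LinearMap.trace ℝ _ (L : EuclideanSpace ℝ (Fin d) →ₗ[ℝ] EuclideanSpace ℝ (Fin d))
      = (matOf L).trace :=
  LinearMap.trace_eq_matrix_trace ℝ bE _

lemma continuous_matOf : Continuous
    (matOf : (EuclideanSpace ℝ (Fin d) →L[ℝ] EuclideanSpace ℝ (Fin d)) →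
      Matrix (Fin d) (Fin d) ℝ) := by
  have : (matOf : (EuclideanSpace ℝ (Fin d) →L[ℝ] EuclideanSpace ℝ (Fin d)) →
      Matrix (Fin d) (Fin d) ℝ)
      = ((LinearMap.toMatrix bE bE).toLinearMap.comp
          (ContinuousLinearMap.coeLM ℝ) :
        (EuclideanSpace ℝ (Fin d) →L[ℝ] EuclideanSpace ℝ (Fin d)) →ₗ[ℝ]
          Matrix (Fin d) (Fin d) ℝ) := rfl
  rw [this]
  exact LinearMap.continuous_of_finiteDimensional _

end Bridge

end VCIL

open VCIL in
/-- Volume-change integral limit (Jacobian term of the shape-derivative splitting). -/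
theorem volume_change_integral_limit
    {d : ℕ} (Ω : Set (EuclideanSpace ℝ (Fin d)))
    (hΩ_open : IsOpen Ω) (hΩ_bdd : Bornology.IsBounded Ω)
    (hfrontier : volume (frontier Ω) = 0)
    (V : EuclideanSpace ℝ (Fin d) → EuclideanSpace ℝ (Fin d))
    (hV : ContDiff ℝ 2 V) (hVbdd : ∃ M : ℝ, ∀ x, ‖V x‖ ≤ M)
    (h : EuclideanSpace ℝ (Fin d) → ℝ) (hh : Continuous h) :
    Tendsto (fun ε : ℝ =>
        (1 / ε) * ∫ x in {y | y + ε • V y ∈ Ω},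
          h x * (1 - |ContinuousLinearMap.det
            (ContinuousLinearMap.id ℝ (EuclideanSpace ℝ (Fin d)) + ε • fderiv ℝ V x)|))
      (nhdsWithin 0 {0}ᶜ)
      (nhds (- ∫ x in Ω, h x * LinearMap.trace ℝ _ (fderiv ℝ V x).toLinearMap)) := by
  classical
  obtain ⟨MV, hMV⟩ := hVbdd
  set MV' : ℝ := max MV 0 with hMV'def
  have hMV' : ∀ x, ‖V x‖ ≤ MV' := fun x => (hMV x).trans (le_max_left _ _)
  have hMV'0 : 0 ≤ MV' := le_max_right _ _
  obtain ⟨r, hr⟩ := hΩ_bdd.subset_closedBall (0 : EuclideanSpace ℝ (Fin d))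
  set r' : ℝ := max r 0 with hr'def
  have hr' : Ω ⊆ Metric.closedBall 0 r' :=
    hr.trans (Metric.closedBall_subset_closedBall (le_max_left _ _))
  set ρ : ℝ := r' + MV' with hρdef
  set K : Set (EuclideanSpace ℝ (Fin d)) := Metric.closedBall 0 ρ with hKdef
  have hK : IsCompact K := isCompact_closedBall _ _
  have hVcont : Continuous V := hV.continuous
  have hfd : Continuous (fderiv ℝ V) := hV.continuous_fderiv (by norm_num)
  set M : EuclideanSpace ℝ (Fin d) → Matrix (Fin d) (Fin d) ℝ :=
    fun x => matOf (fderiv ℝ V x) with hMdef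
  have hMcont : Continuous M := continuous_matOf.comp hfd
  have hMentry : ∀ i j, Continuous fun x => M x i j := fun i j =>
    (continuous_apply j).comp ((continuous_apply i).comp hMcont)
  set ψ : EuclideanSpace ℝ (Fin d) → ℝ := fun x => ∑ i, ∑ j, |M x i j| with hψdef
  have hψcont : Continuous ψ := by
    apply continuous_finset_sum
    intro i _
    apply continuous_finset_sum
    intro j _
    exact (hMentry i j).abs
  have hψ0 : ∀ x, 0 ≤ ψ x := fun x =>
    Finset.sum_nonneg fun _ _ => Finset.sum_nonneg fun _ _ => abs_nonneg _
  obtain ⟨Cψ, hCψ⟩ := hK.exists_bound_of_continuousOn hψcont.continuousOn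
  set c : ℝ := max Cψ 0 with hcdef
  have hc0 : 0 ≤ c := le_max_right _ _
  have hent : ∀ x ∈ K, ∀ i j, |M x i j| ≤ c := by
    intro x hx i j
    refine (entry_bound_exists (M x) i j).trans ?_
    calc ψ x ≤ ‖ψ x‖ := le_abs_self _
      _ ≤ Cψ := hCψ x hx
      _ ≤ c := le_max_left _ _
  have htrb : ∀ x ∈ K, |(M x).trace| ≤ c := by
    intro x hx
    have h1 : |(M x).trace| ≤ ∑ i, |M x i i| := by
      rw [Matrix.trace]
      exact Finset.abs_sum_le_sum_abs _ _
    have h2 : ∑ i, |M x i i| ≤ ψ x := by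
      refine Finset.sum_le_sum fun i _ => ?_
      exact Finset.single_le_sum (f := fun j => |M x i j|)
        (fun _ _ => abs_nonneg _) (Finset.mem_univ i)
    calc |(M x).trace| ≤ ψ x := h1.trans h2
      _ ≤ ‖ψ x‖ := le_abs_self _
      _ ≤ Cψ := hCψ x hx
      _ ≤ c := le_max_left _ _
  obtain ⟨Ch, hCh⟩ := hK.exists_bound_of_continuousOn hh.continuousOn
  set Ch' : ℝ := max Ch 0 with hCh'def
  have hCh' : ∀ x ∈ K, |h x| ≤ Ch' := fun x hx =>
    le_trans (hCh x hx) (le_max_left _ _)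
  have hCh'0 : 0 ≤ Ch' := le_max_right _ _
  set C2 : ℝ := 2 ^ d * (d.factorial * max 1 c ^ d) with hC2def
  have hC20 : 0 < C2 := by positivity
  set Cb : ℝ := Ch' * (c + C2) with hCbdef
  have hCb0 : 0 ≤ Cb := by positivity
  -- the family of sets and functions
  set A : ℝ → Set (EuclideanSpace ℝ (Fin d)) := fun ε => {y | y + ε • V y ∈ Ω} with hAdef
  have hAopen : ∀ ε, IsOpen (A ε) := by
    intro ε
    have : A ε = (fun y => y + ε • V y) ⁻¹' Ω := rfl
    rw [this]
    exact hΩ_open.preimage (continuous_id.add (hVcont.const_smul ε))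
  set g : ℝ → EuclideanSpace ℝ (Fin d) → ℝ := fun ε x =>
    h x * (1 - |ContinuousLinearMap.det
      (ContinuousLinearMap.id ℝ (EuclideanSpace ℝ (Fin d)) + ε • fderiv ℝ V x)|) with hgdef
  have hdetg : ∀ ε x, g ε x = h x * (1 - |(1 + ε • M x).det|) := by
    intro ε x
    rw [hgdef]
    simp only [det_eq_matrix]
    rfl
  have hgcont : ∀ ε, Continuous (g ε) := by
    intro ε
    apply hh.mul
    apply continuous_const.sub
    exact (ContinuousLinearMap.continuous_det.comp
      (continuous_const.add (hfd.const_smul ε))).abs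
  set F : ℝ → EuclideanSpace ℝ (Fin d) → ℝ := fun ε =>
    (A ε).indicator (fun x => (1 / ε) * g ε x) with hFdef
  set f₀ : EuclideanSpace ℝ (Fin d) → ℝ :=
    Ω.indicator (fun x => -(h x * (M x).trace)) with hf₀def
  -- rewrite the LHS family
  have hEq : ∀ ε : ℝ, (1 / ε) * ∫ x in A ε, g ε x = ∫ x, F ε x := by
    intro ε
    simp only [hFdef]
    rw [integral_indicator (hAopen ε).measurableSet]
    exact (integral_const_mul _ _).symm
  -- rewrite the target
  have htr : ∀ x, h x * LinearMap.trace ℝ _ (fderiv ℝ V x).toLinearMap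
      = h x * (M x).trace := by
    intro x
    rw [hMdef]
    rw [trace_eq_matrix]
  have hTarget : (- ∫ x in Ω, h x * LinearMap.trace ℝ _ (fderiv ℝ V x).toLinearMap)
      = ∫ x, f₀ x := by
    rw [hf₀def]
    rw [integral_indicator hΩ_open.measurableSet]
    rw [integral_neg]
    congr 1
    exact integral_congr_ae (Filter.Eventually.of_forall fun x => htr x)
  rw [show (fun ε : ℝ => (1 / ε) * ∫ x in {y | y + ε • V y ∈ Ω},
        h x * (1 - |ContinuousLinearMap.det
          (ContinuousLinearMap.id ℝ (EuclideanSpace ℝ (Fin d)) + ε • fderiv ℝ V x)|))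
      = fun ε : ℝ => ∫ x, F ε x from funext fun ε => hEq ε, hTarget]
  -- dominated convergence
  set bound : EuclideanSpace ℝ (Fin d) → ℝ := K.indicator (fun _ => Cb) with hbdef
  have hbound0 : ∀ x, 0 ≤ bound x := by
    intro x
    rw [hbdef]
    by_cases hx : x ∈ K
    · rw [Set.indicator_of_mem hx]; exact hCb0
    · rw [Set.indicator_of_notMem hx]
  have hev : ∀ᶠ ε in nhdsWithin (0:ℝ) {0}ᶜ, |ε| ≤ 1 ∧ ε ≠ 0 := by
    refine Filter.Eventually.and ?_ ?_
    · refine Filter.Eventually.filter_mono nhdsWithin_le_nhds ?_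
      filter_upwards [Metric.ball_mem_nhds (0:ℝ) one_pos] with x hx
      simp only [Metric.mem_ball, Real.dist_eq, sub_zero] at hx
      exact le_of_lt hx
    · filter_upwards [eventually_mem_nhdsWithin] with x hx
      simpa using hx
  have hmemK : ∀ ε : ℝ, |ε| ≤ 1 → ∀ x ∈ A ε, x ∈ K := by
    intro ε hε x hx
    have hΩx : x + ε • V x ∈ Ω := hx
    have h1 : ‖x + ε • V x‖ ≤ r' := by
      have := hr' hΩx
      rwa [Metric.mem_closedBall, dist_zero_right] at this
    have h2 : ‖x‖ ≤ r' + MV' := by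
      have hxeq : x = (x + ε • V x) - ε • V x := by abel
      calc ‖x‖ = ‖(x + ε • V x) - ε • V x‖ := by rw [← hxeq]
        _ ≤ ‖x + ε • V x‖ + ‖ε • V x‖ := norm_sub_le _ _
        _ ≤ r' + |ε| * ‖V x‖ := by
            rw [norm_smul, Real.norm_eq_abs]
            exact add_le_add h1 le_rfl
        _ ≤ r' + 1 * MV' := by
            have := mul_le_mul hε (hMV' x) (norm_nonneg _) zero_le_one
            linarith
        _ = r' + MV' := by ring
    rw [hKdef, Metric.mem_closedBall, dist_zero_right]
    exact h2
  apply MeasureTheory.tendsto_integral_filter_of_dominated_convergence bound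
  · -- measurability
    filter_upwards with ε
    exact ((continuous_const.mul (hgcont ε)).aestronglyMeasurable).indicator
      (hAopen ε).measurableSet
  · -- bound
    filter_upwards [hev] with ε hε
    obtain ⟨hε1, hε0⟩ := hε
    refine Filter.Eventually.of_forall fun x => ?_
    simp only [hFdef]
    by_cases hx : x ∈ A ε
    · rw [Set.indicator_of_mem hx]
      have hxK : x ∈ K := hmemK ε hε1 x hx
      have hest := one_sub_abs_det_est (M x) (fun i j => hent x hxK i j) hε1
      rw [← hC2def] at hest
      have htrx := htrb x hxK
      have hhx := hCh' x hxK
      have h1 : abs (1 - |(1 + ε • M x).det|) ≤ |ε| * (c + C2) := by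
        refine hest.trans ?_
        have : |(M x).trace| + C2 ≤ c + C2 := by linarith
        have habs : (0:ℝ) ≤ |ε| := abs_nonneg _
        nlinarith
      have hεpos : 0 < |ε| := abs_pos.mpr hε0
      rw [Real.norm_eq_abs, hdetg, abs_mul, abs_mul]
      calc |1/ε| * (|h x| * abs (1 - |(1 + ε • M x).det|))
          ≤ |1/ε| * (Ch' * (|ε| * (c + C2))) := by
            refine mul_le_mul_of_nonneg_left ?_ (abs_nonneg _)
            refine mul_le_mul hhx h1 (abs_nonneg _) hCh'0
        _ = Cb := by
            rw [hCbdef, abs_div, abs_one]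
            field_simp
        _ ≤ bound x := by
            rw [hbdef, Set.indicator_of_mem hxK]
    · rw [Set.indicator_of_notMem hx]
      simpa using hbound0 x
  · -- integrability of bound
    rw [hbdef]
    refine MeasureTheory.IntegrableOn.integrable_indicator ?_ hK.measurableSet
    refine integrableOn_const (ne_of_lt ?_)
    exact hK.measure_lt_top
  · -- pointwise limit
    have hae : ∀ᵐ x : EuclideanSpace ℝ (Fin d), x ∉ frontier Ω := by
      rw [← MeasureTheory.measure_eq_zero_iff_ae_notMem]
      exact hfrontier
    filter_upwards [hae] with x hxf
    by_cases hx : x ∈ Ω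
    · -- interior point
      have hcont : Tendsto (fun ε : ℝ => x + ε • V x) (nhds 0) (nhds x) := by
        have : Continuous (fun ε : ℝ => x + ε • V x) :=
          continuous_const.add (continuous_id.smul continuous_const)
        have h0 := this.tendsto 0
        simpa using h0
      have hevΩ : ∀ᶠ ε : ℝ in nhds 0, x + ε • V x ∈ Ω :=
        hcont.eventually (hΩ_open.mem_nhds hx)
      have hevΩ' : ∀ᶠ ε in nhdsWithin (0:ℝ) {0}ᶜ, x ∈ A ε :=
        Filter.Eventually.filter_mono nhdsWithin_le_nhds hevΩ
      have hlim : Tendsto (fun ε : ℝ => h x * ((1 - |(1 + ε • M x).det|) / ε))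
          (nhdsWithin 0 {0}ᶜ) (nhds (h x * (-(M x).trace))) :=
        (tendsto_one_sub_abs_det (M x)).const_mul (h x)
      have hf₀x : f₀ x = h x * (-(M x).trace) := by
        rw [hf₀def, Set.indicator_of_mem hx]
        ring
      rw [hf₀x]
      refine hlim.congr' ?_
      filter_upwards [hevΩ'] with ε hε
      simp only [hFdef]
      rw [Set.indicator_of_mem hε, hdetg]
      ring
    · -- exterior point
      have hxcl : x ∉ closure Ω := by
        intro hcl
        exact hxf ⟨hcl, by rwa [hΩ_open.interior_eq]⟩
      have hcont : Tendsto (fun ε : ℝ => x + ε • V x) (nhds 0) (nhds x) := by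
        have : Continuous (fun ε : ℝ => x + ε • V x) :=
          continuous_const.add (continuous_id.smul continuous_const)
        have h0 := this.tendsto 0
        simpa using h0
      have hevc : ∀ᶠ ε : ℝ in nhds 0, x + ε • V x ∈ (closure Ω)ᶜ :=
        hcont.eventually (isOpen_compl_iff.mpr isClosed_closure |>.mem_nhds hxcl)
      have hevΩ' : ∀ᶠ ε in nhdsWithin (0:ℝ) {0}ᶜ, x ∉ A ε := by
        refine Filter.Eventually.filter_mono nhdsWithin_le_nhds ?_
        filter_upwards [hevc] with ε hε
        intro hA
        exact hε (subset_closure hA)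
      have hf₀x : f₀ x = 0 := by
        rw [hf₀def, Set.indicator_of_notMem hx]
      rw [hf₀x]
      refine tendsto_const_nhds.congr' ?_
      filter_upwards [hevΩ'] with ε hε
      simp only [hFdef]
      rw [Set.indicator_of_notMem hε]
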